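/- arXiv:2305.13743 — 3 statements merged into one kernel-verified Lean document; each statement's English description precedes it below -/
import Mathlib

section
/- Let n be a positive integer and let S₁, …, S_n be i.i.d. real random variables such that n·S_i has the chi-square distribution χ²_n with n degrees of freedom. Then for every ε ∈ (0,1), P( |max_{1 ≤ i ≤ n} S_i − 1| > ε ) ≤ (n+1)·exp( −n·ε²/(4(1+ε)) ). -/
open MeasureTheory ProbabilityTheory Filter

noncomputable section

lemma lintegral_exp_gammaMeasure {a r t : ℝ} (ha : 0 < a) (hr : 0 < r) (ht : t < r) :
    ∫⁻ x, ENNReal.ofReal (Real.exp (t * x)) ∂(gammaMeasure a r) =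
      ENNReal.ofReal ((r / (r - t)) ^ a) := by
  have hrt : 0 < r - t := by linarith
  have hmeas : Measurable fun x : ℝ => ENNReal.ofReal (Real.exp (t * x)) :=
    ((measurable_const.mul measurable_id).exp).ennreal_ofReal
  have hpdf : Measurable (gammaPDF a r) := (measurable_gammaPDFReal a r).ennreal_ofReal
  rw [gammaMeasure, MeasureTheory.lintegral_withDensity_eq_lintegral_mul _ hpdf hmeas]
  have hpt : ∀ x : ℝ, (gammaPDF a r * fun x => ENNReal.ofReal (Real.exp (t * x))) x
      = ENNReal.ofReal ((r / (r - t)) ^ a) * gammaPDF a (r - t) x := by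
    intro x
    simp only [Pi.mul_apply, gammaPDF]
    rw [← ENNReal.ofReal_mul (gammaPDFReal_nonneg ha hr x),
      ← ENNReal.ofReal_mul (by positivity)]
    congr 1
    unfold gammaPDFReal
    by_cases hx : 0 ≤ x
    · simp only [if_pos hx]
      have h1 : (r / (r - t)) ^ a * (r - t) ^ a = r ^ a := by
        rw [← Real.mul_rpow (by positivity) hrt.le]
        congr 1
        field_simp
      have h2 : Real.exp (-(r * x)) * Real.exp (t * x) = Real.exp (-((r - t) * x)) := by
        rw [← Real.exp_add]; ring_nf
      have hG : Real.Gamma a ≠ 0 := (Real.Gamma_pos_of_pos ha).ne'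
      rw [← h2, ← h1]
      ring
    · simp only [if_neg hx, zero_mul, mul_zero]
  simp_rw [hpt]
  rw [lintegral_const_mul' _ _ ENNReal.ofReal_ne_top, lintegral_gammaPDF_eq_one ha hrt, mul_one]

lemma gammaMeasure_upper_tail {a r t c : ℝ} (ha : 0 < a) (hr : 0 < r) (ht0 : 0 ≤ t)
    (ht : t < r) :
    gammaMeasure a r {x | c < x} ≤ ENNReal.ofReal (Real.exp (-(t * c)) * (r / (r - t)) ^ a) := by
  have hset : {x : ℝ | c < x} = Set.Ioi c := rfl
  calc gammaMeasure a r {x | c < x}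
      = ∫⁻ x, Set.indicator {x | c < x} 1 x ∂(gammaMeasure a r) := by
        rw [lintegral_indicator_one (hset ▸ measurableSet_Ioi)]
    _ ≤ ∫⁻ x, ENNReal.ofReal (Real.exp (-(t * c)) * Real.exp (t * x)) ∂(gammaMeasure a r) := by
        refine lintegral_mono fun x => ?_
        rw [← Real.exp_add]
        by_cases hx : x ∈ {x : ℝ | c < x}
        · rw [Set.indicator_of_mem hx, Pi.one_apply]
          refine ENNReal.one_le_ofReal.mpr (Real.one_le_exp ?_)
          have : c < x := hx
          nlinarith
        · rw [Set.indicator_of_notMem hx]; exact zero_le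
    _ = ENNReal.ofReal (Real.exp (-(t * c))) *
          ∫⁻ x, ENNReal.ofReal (Real.exp (t * x)) ∂(gammaMeasure a r) := by
        simp_rw [ENNReal.ofReal_mul (Real.exp_nonneg _)]
        exact lintegral_const_mul' _ _ ENNReal.ofReal_ne_top
    _ = ENNReal.ofReal (Real.exp (-(t * c)) * (r / (r - t)) ^ a) := by
        rw [lintegral_exp_gammaMeasure ha hr ht,
          ENNReal.ofReal_mul (Real.exp_nonneg _)]

lemma gammaMeasure_lower_tail {a r t c : ℝ} (ha : 0 < a) (hr : 0 < r) (ht0 : 0 ≤ t) :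
    gammaMeasure a r {x | x < c} ≤ ENNReal.ofReal (Real.exp (t * c) * (r / (r + t)) ^ a) := by
  have hset : {x : ℝ | x < c} = Set.Iio c := rfl
  have ht : -t < r := by linarith
  calc gammaMeasure a r {x | x < c}
      = ∫⁻ x, Set.indicator {x | x < c} 1 x ∂(gammaMeasure a r) := by
        rw [lintegral_indicator_one (hset ▸ measurableSet_Iio)]
    _ ≤ ∫⁻ x, ENNReal.ofReal (Real.exp (t * c) * Real.exp (-t * x)) ∂(gammaMeasure a r) := by
        refine lintegral_mono fun x => ?_
        rw [← Real.exp_add]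
        by_cases hx : x ∈ {x : ℝ | x < c}
        · rw [Set.indicator_of_mem hx, Pi.one_apply]
          refine ENNReal.one_le_ofReal.mpr (Real.one_le_exp ?_)
          have : x < c := hx
          nlinarith
        · rw [Set.indicator_of_notMem hx]; exact zero_le
    _ = ENNReal.ofReal (Real.exp (t * c)) *
          ∫⁻ x, ENNReal.ofReal (Real.exp (-t * x)) ∂(gammaMeasure a r) := by
        simp_rw [ENNReal.ofReal_mul (Real.exp_nonneg _)]
        exact lintegral_const_mul' _ _ ENNReal.ofReal_ne_top
    _ ≤ ENNReal.ofReal (Real.exp (t * c) * (r / (r + t)) ^ a) := by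
        rw [lintegral_exp_gammaMeasure ha hr ht,
          ENNReal.ofReal_mul (Real.exp_nonneg _), sub_neg_eq_add]

lemma log_le_half_sub {x : ℝ} (hx : 1 ≤ x) : Real.log x ≤ (x - x⁻¹) / 2 := by
  have h0 : (0:ℝ) < x := by linarith
  have h := Real.self_le_sinh_iff.mpr (Real.log_nonneg hx)
  rwa [Real.sinh_log h0] at h

lemma log_one_sub_le {ε : ℝ} (h0 : 0 < ε) (h1 : ε < 1) :
    Real.log (1 - ε) ≤ -(ε + ε ^ 2 / 2) := by
  have hε : (0:ℝ) < 1 - ε := by linarith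
  have hsub : Set.uIcc (1 - ε) (1:ℝ) ⊆ {x : ℝ | x ≠ 0} := by
    intro x hx
    rw [Set.uIcc_of_le (by linarith)] at hx
    have : 1 - ε ≤ x := hx.1
    simp only [Set.mem_setOf_eq]
    intro h; rw [h] at this; linarith
  have hInt : ∫ x in (1 - ε)..1, x⁻¹ = Real.log ((1:ℝ) / (1 - ε)) :=
    integral_inv (fun h => (hsub h) rfl)
  have hIntg : IntervalIntegrable (fun x : ℝ => x⁻¹) MeasureTheory.volume (1 - ε) 1 :=
    (ContinuousOn.mono continuousOn_inv₀ hsub).intervalIntegrable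
  have hIntg2 : IntervalIntegrable (fun x : ℝ => 2 - x) MeasureTheory.volume (1 - ε) 1 :=
    (continuous_const.sub continuous_id).intervalIntegrable _ _
  have hmono : (∫ x in (1 - ε)..1, (2 - x)) ≤ ∫ x in (1 - ε)..1, x⁻¹ := by
    refine intervalIntegral.integral_mono_on (by linarith) hIntg2 hIntg fun x hx => ?_
    have hx1 : 1 - ε ≤ x := hx.1
    have hx2 : x ≤ 1 := hx.2
    have hx0 : 0 < x := by linarith
    rw [show x⁻¹ = 1 / x by rw [one_div], le_div_iff₀ hx0]
    nlinarith [sq_nonneg (x - 1)]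
  have hval : (∫ x in (1 - ε)..1, (2 - x)) = ε + ε ^ 2 / 2 := by
    rw [intervalIntegral.integral_sub (intervalIntegrable_const) 
      (intervalIntegral.intervalIntegrable_id)]
    rw [intervalIntegral.integral_const, integral_id]
    simp only [smul_eq_mul]
    ring
  rw [hInt, one_div, Real.log_inv] at hmono
  rw [hval] at hmono
  linarith



/-- concentration of the maximum of `n` i.i.d. normalized chi-square
variables: if `n·Sᵢ ∼ χ²ₙ` are i.i.d., then for every `ε ∈ (0,1)`,
`P(|maxᵢ Sᵢ − 1| > ε) ≤ (n+1)·exp(−n ε²/(4(1+ε)))`. -/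
theorem statement6
    (Ω : Type) [MeasurableSpace Ω] (μ : Measure Ω) [IsProbabilityMeasure μ]
    (n : ℕ) (hn : 0 < n)
    (S : Fin n → Ω → ℝ)
    (hind : iIndepFun S μ)
    (hident : ∀ i j : Fin n, Measure.map (S i) μ = Measure.map (S j) μ)
    (hchisq : ∀ i : Fin n,
      Measure.map (fun ω => (n : ℝ) * S i ω) μ = gammaMeasure ((n : ℝ) / 2) (1 / 2)) :
    ∀ ε : ℝ, 0 < ε → ε < 1 →
      μ {ω | ε < |(⨆ i : Fin n, S i ω) - 1|} ≤
        ENNReal.ofReal (((n : ℝ) + 1) * Real.exp (-(n * ε ^ 2) / (4 * (1 + ε)))) := by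
  intro ε hε0 hε1
  have hn' : (0:ℝ) < n := Nat.cast_pos.mpr hn
  have ha : (0:ℝ) < (n:ℝ) / 2 := by positivity
  have hr : (0:ℝ) < (1:ℝ)/2 := by norm_num
  set E : ℝ := Real.exp (-(n * ε ^ 2) / (4 * (1 + ε))) with hE
  have hEpos : 0 < E := Real.exp_pos _
  -- a.e.-measurability of each n * S i
  have haem : ∀ i : Fin n, AEMeasurable (fun ω => (n : ℝ) * S i ω) μ := by
    intro i
    by_contra h
    have h0 : Measure.map (fun ω => (n : ℝ) * S i ω) μ = 0 :=
      Measure.map_of_not_aemeasurable h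
    rw [hchisq i] at h0
    have : IsProbabilityMeasure (gammaMeasure ((n : ℝ) / 2) (1/2)) :=
      isProbabilityMeasure_gammaMeasure ha hr
    have h1 := this.measure_univ
    rw [h0] at h1
    simp at h1
  have i0 : Fin n := ⟨0, hn⟩
  haveI : Nonempty (Fin n) := ⟨i0⟩
  -- upper tail for each i
  have hup : ∀ i : Fin n, μ {ω | 1 + ε < S i ω} ≤ ENNReal.ofReal E := by
    intro i
    have hpre : {ω | 1 + ε < S i ω}
        = (fun ω => (n : ℝ) * S i ω) ⁻¹' {x | (n : ℝ) * (1 + ε) < x} := by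
      ext ω
      simp only [Set.mem_setOf_eq, Set.mem_preimage, mul_lt_mul_iff_right₀ hn']
    have hmeasset : MeasurableSet {x : ℝ | (n : ℝ) * (1 + ε) < x} := measurableSet_Ioi
    rw [hpre, ← Measure.map_apply_of_aemeasurable (haem i) hmeasset, hchisq i]
    set t : ℝ := ε / (2 * (1 + ε)) with hts
    have ht0 : 0 ≤ t := by positivity
    have htr : t < 1/2 := by
      rw [hts, div_lt_iff₀ (by linarith)]
      nlinarith
    refine (gammaMeasure_upper_tail ha hr ht0 htr).trans (ENNReal.ofReal_le_ofReal ?_)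
    have h1e : (1:ℝ) + ε ≠ 0 := by linarith
    have hrt : (1:ℝ)/2 - t = 1 / (2 * (1 + ε)) := by
      rw [hts]; field_simp; ring
    have hdiv : (1:ℝ)/2 / ((1:ℝ)/2 - t) = 1 + ε := by
      rw [hrt]; field_simp
    have htc : t * ((n : ℝ) * (1 + ε)) = n * ε / 2 := by
      rw [hts]; field_simp
    rw [hdiv, htc, Real.rpow_def_of_pos (by linarith : (0:ℝ) < 1 + ε), ← Real.exp_add, hE]
    refine Real.exp_le_exp.mpr ?_
    have hlog := log_le_half_sub (by linarith : (1:ℝ) ≤ 1 + ε)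
    have hinv : (1 + ε)⁻¹ = 1 / (1 + ε) := by rw [one_div]
    have key : (n:ℝ) / 2 * (((1 + ε) - (1 + ε)⁻¹) / 2) - n * ε / 2
        = -(n * ε ^ 2) / (4 * (1 + ε)) := by
      rw [hinv]; field_simp; ring
    nlinarith [mul_le_mul_of_nonneg_left hlog (by positivity : (0:ℝ) ≤ (n:ℝ)/2)]
  -- lower tail for i0
  have hlow : μ {ω | S i0 ω < 1 - ε} ≤ ENNReal.ofReal E := by
    have hpre : {ω | S i0 ω < 1 - ε}
        = (fun ω => (n : ℝ) * S i0 ω) ⁻¹' {x | x < (n : ℝ) * (1 - ε)} := by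
      ext ω
      simp only [Set.mem_setOf_eq, Set.mem_preimage, mul_lt_mul_iff_right₀ hn']
    have hmeasset : MeasurableSet {x : ℝ | x < (n : ℝ) * (1 - ε)} := measurableSet_Iio
    rw [hpre, ← Measure.map_apply_of_aemeasurable (haem i0) hmeasset, hchisq i0]
    set t : ℝ := ε / (2 * (1 - ε)) with hts
    have ht0 : 0 ≤ t := by
      apply div_nonneg hε0.le; linarith
    refine (gammaMeasure_lower_tail ha hr ht0).trans (ENNReal.ofReal_le_ofReal ?_)
    have h1e : (1:ℝ) - ε ≠ 0 := by linarith
    have hrt : (1:ℝ)/2 + t = 1 / (2 * (1 - ε)) := by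
      rw [hts]; field_simp; ring
    have hdiv : (1:ℝ)/2 / ((1:ℝ)/2 + t) = 1 - ε := by
      rw [hrt]; field_simp
    have htc : t * ((n : ℝ) * (1 - ε)) = n * ε / 2 := by
      rw [hts]; field_simp
    rw [hdiv, htc, Real.rpow_def_of_pos (by linarith : (0:ℝ) < 1 - ε), ← Real.exp_add, hE]
    refine Real.exp_le_exp.mpr ?_
    have hlog := log_one_sub_le hε0 hε1
    have h4 : (0:ℝ) < 4 * (1 + ε) := by linarith
    have key : n * ε / 2 + (n:ℝ)/2 * (-(ε + ε^2/2)) ≤ -(n * ε ^ 2) / (4 * (1 + ε)) := by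
      have hdd : (n:ℝ) * ε ^ 2 / (4 * (1 + ε)) ≤ (n:ℝ) * ε ^ 2 / 4 :=
        div_le_div_of_nonneg_left (by positivity) (by norm_num) (by linarith)
      have hL : (n:ℝ) * ε / 2 + (n:ℝ)/2 * (-(ε + ε^2/2)) = -((n:ℝ) * ε ^ 2 / 4) := by ring
      have hR : -((n:ℝ) * ε ^ 2) / (4 * (1 + ε)) = -((n:ℝ) * ε ^ 2 / (4 * (1 + ε))) := by ring
      rw [hL, hR]
      linarith
    nlinarith [mul_le_mul_of_nonneg_left hlog (by positivity : (0:ℝ) ≤ (n:ℝ)/2)]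
  -- event inclusion
  have hsub : {ω | ε < |(⨆ i : Fin n, S i ω) - 1|} ⊆
      (⋃ i : Fin n, {ω | 1 + ε < S i ω}) ∪ {ω | S i0 ω < 1 - ε} := by
    intro ω hω
    simp only [Set.mem_setOf_eq] at hω
    rcases lt_abs.mp hω with h | h
    · left
      have hsup : 1 + ε < ⨆ i, S i ω := by linarith
      have hex : ∃ i, 1 + ε < S i ω := by
        by_contra hc
        push_neg at hc
        exact absurd (ciSup_le hc) (not_le.mpr hsup)
      obtain ⟨i, hi⟩ := hex
      exact Set.mem_iUnion.mpr ⟨i, hi⟩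
    · right
      have hle : S i0 ω ≤ ⨆ i, S i ω :=
        le_ciSup (Set.Finite.bddAbove (Set.finite_range fun i => S i ω)) i0
      simp only [Set.mem_setOf_eq]
      linarith
  calc μ {ω | ε < |(⨆ i : Fin n, S i ω) - 1|}
      ≤ μ ((⋃ i : Fin n, {ω | 1 + ε < S i ω}) ∪ {ω | S i0 ω < 1 - ε}) := measure_mono hsub
    _ ≤ μ (⋃ i : Fin n, {ω | 1 + ε < S i ω}) + μ {ω | S i0 ω < 1 - ε} := measure_union_le _ _
    _ ≤ (∑' i : Fin n, μ {ω | 1 + ε < S i ω}) + ENNReal.ofReal E :=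
        add_le_add (measure_iUnion_le _) hlow
    _ ≤ (∑' i : Fin n, ENNReal.ofReal E) + ENNReal.ofReal E := by
        gcongr with i
        exact hup i
    _ = (n : ENNReal) * ENNReal.ofReal E + ENNReal.ofReal E := by
        rw [tsum_fintype]
        simp [Finset.sum_const, Finset.card_univ, nsmul_eq_mul]
    _ = ENNReal.ofReal (((n : ℝ) + 1) * E) := by
        rw [← ENNReal.ofReal_natCast n, ← ENNReal.ofReal_mul (by positivity),
          ← ENNReal.ofReal_add (by positivity) hEpos.le]
        congr 1
        ring
end
end

section
/- Let Y ∈ ℝ^{n×q}, X ∈ ℝ^{n×p} with XᵀX invertible, and λ > 0. With X_λ = XᵀX + λI_p, S_Y = Yᵀ(I_n − X X_λ^{−1}Xᵀ)Y, B̂ = (XᵀX)^{−1}XᵀY and W = Yᵀ(I_n − X(XᵀX)^{−1}Xᵀ)Y, one has S_Y = W + B̂ᵀ( λ^{−1}I_p + (XᵀX)^{−1} )^{−1} B̂ (the matrix λ^{−1}I_p + (XᵀX)^{−1} being positive definite, hence invertible). -/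
open Matrix

noncomputable section

lemma aux_posDef_ATA {n p : ℕ} (X : Matrix (Fin n) (Fin p) ℝ)
    (hX : IsUnit (Xᵀ * X).det) : (Xᵀ * X).PosDef := by
  have hU : IsUnit (Xᵀ * X) := (Matrix.isUnit_iff_isUnit_det _).2 hX
  refine Matrix.PosDef.of_dotProduct_mulVec_pos (Matrix.isHermitian_conjTranspose_mul_self X) fun x hx => ?_
  have hXx : X *ᵥ x ≠ 0 := by
    intro h
    apply hx
    have : (Xᵀ * X) *ᵥ x = 0 := by rw [← Matrix.mulVec_mulVec, h, Matrix.mulVec_zero]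
    have hinj := Matrix.mulVec_injective_iff_isUnit.mpr hU
    have := hinj (a₁ := x) (a₂ := 0) (by simpa using this)
    simpa using this
  have hle : 0 ≤ (X *ᵥ x) ⬝ᵥ (X *ᵥ x) := Finset.sum_nonneg fun i _ => mul_self_nonneg _
  have hne : (X *ᵥ x) ⬝ᵥ (X *ᵥ x) ≠ 0 := fun h => hXx (dotProduct_self_eq_zero.mp h)
  have key : star x ⬝ᵥ (Xᵀ * X) *ᵥ x = (X *ᵥ x) ⬝ᵥ (X *ᵥ x) := by
    rw [← Matrix.mulVec_mulVec, Matrix.dotProduct_mulVec, Matrix.vecMul_transpose]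
    simp
  rw [key]
  exact lt_of_le_of_ne hle (Ne.symm hne)

/-- with `X_λ = XᵀX + λI`, `S_Y = Yᵀ(I − X X_λ⁻¹Xᵀ)Y`,
`B̂ = (XᵀX)⁻¹XᵀY` and `W = Yᵀ(I − X(XᵀX)⁻¹Xᵀ)Y`, one has
`S_Y = W + B̂ᵀ(λ⁻¹I + (XᵀX)⁻¹)⁻¹B̂`, the matrix `λ⁻¹I + (XᵀX)⁻¹` being positive
definite (hence invertible). -/
theorem statement8 (n p q : ℕ)
    (Y : Matrix (Fin n) (Fin q) ℝ) (X : Matrix (Fin n) (Fin p) ℝ)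
    (hX : IsUnit (Xᵀ * X).det)
    (lam : ℝ) (hlam : 0 < lam) :
    (lam⁻¹ • (1 : Matrix (Fin p) (Fin p) ℝ) + (Xᵀ * X)⁻¹).PosDef ∧
    Yᵀ * (1 - X * (Xᵀ * X + lam • (1 : Matrix (Fin p) (Fin p) ℝ))⁻¹ * Xᵀ) * Y
      = Yᵀ * (1 - X * (Xᵀ * X)⁻¹ * Xᵀ) * Y
        + ((Xᵀ * X)⁻¹ * Xᵀ * Y)ᵀ
          * (lam⁻¹ • (1 : Matrix (Fin p) (Fin p) ℝ) + (Xᵀ * X)⁻¹)⁻¹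
          * ((Xᵀ * X)⁻¹ * Xᵀ * Y) := by
  set A := Xᵀ * X with hA
  have hApd : A.PosDef := aux_posDef_ATA X hX
  have hIpd : ((1 : Matrix (Fin p) (Fin p) ℝ)).PosDef := Matrix.PosDef.one
  have hsmul : (lam⁻¹ • (1 : Matrix (Fin p) (Fin p) ℝ)).PosDef := by
    refine Matrix.PosDef.of_dotProduct_mulVec_pos ?_ fun x hx => ?_
    · simp [Matrix.IsHermitian, Matrix.conjTranspose_smul]
    · have := hIpd.dotProduct_mulVec_pos hx
      simp only [Matrix.smul_mulVec, dotProduct_smul]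
      exact smul_pos (inv_pos.mpr hlam) this
  have hMpd : (lam⁻¹ • (1 : Matrix (Fin p) (Fin p) ℝ) + A⁻¹).PosDef :=
    hsmul.add_posSemidef hApd.inv.posSemidef
  refine ⟨hMpd, ?_⟩
  set L := A + lam • (1 : Matrix (Fin p) (Fin p) ℝ) with hL
  have hLpd : L.PosDef := hApd.add_posSemidef (by
    have : (lam • (1 : Matrix (Fin p) (Fin p) ℝ)).PosDef := by
      refine Matrix.PosDef.of_dotProduct_mulVec_pos (by simp [Matrix.IsHermitian, Matrix.conjTranspose_smul]) fun x hx => ?_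
      have := hIpd.dotProduct_mulVec_pos hx
      simp only [Matrix.smul_mulVec, dotProduct_smul]
      exact smul_pos hlam this
    exact this.posSemidef)
  have hLu : IsUnit L.det := hLpd.det_pos.ne'.isUnit
  have hAinv : A⁻¹ * A = 1 := Matrix.nonsing_inv_mul A hX
  have hAinv' : A * A⁻¹ = 1 := Matrix.mul_nonsing_inv A hX
  have hLinv : L⁻¹ * L = 1 := Matrix.nonsing_inv_mul L hLu
  have hLinv' : L * L⁻¹ = 1 := Matrix.mul_nonsing_inv L hLu
  set M := lam⁻¹ • (1 : Matrix (Fin p) (Fin p) ℝ) + A⁻¹ with hM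
  -- M = lam⁻¹ • (A⁻¹ * L)
  have hMeq : M = lam⁻¹ • (A⁻¹ * L) := by
    rw [hM, hL, Matrix.mul_add, hAinv, Matrix.mul_smul, Matrix.mul_one, smul_add, smul_smul,
      inv_mul_cancel₀ hlam.ne', one_smul]
  -- M⁻¹ = lam • (L⁻¹ * A)
  have hMinv : M⁻¹ = lam • (L⁻¹ * A) := by
    apply Matrix.inv_eq_right_inv
    rw [hMeq, Matrix.smul_mul, Matrix.mul_smul, smul_smul, inv_mul_cancel₀ hlam.ne', one_smul]
    calc A⁻¹ * L * (L⁻¹ * A) = A⁻¹ * (L * L⁻¹) * A := by rw [Matrix.mul_assoc, Matrix.mul_assoc, Matrix.mul_assoc]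
    _ = 1 := by rw [hLinv', Matrix.mul_one, hAinv]
  -- key identity: A⁻¹ - L⁻¹ = lam • (A⁻¹ * L⁻¹ )... and A⁻¹ M⁻¹ A⁻¹
  have hAsymm : Aᵀ = A := by rw [hA, Matrix.transpose_mul, Matrix.transpose_transpose]
  have hAinvT : (A⁻¹)ᵀ = A⁻¹ := by rw [Matrix.transpose_nonsing_inv, hAsymm]
  have hkey : A⁻¹ - L⁻¹ = A⁻¹ * M⁻¹ * A⁻¹ := by
    rw [hMinv]
    have : A⁻¹ * (lam • (L⁻¹ * A)) * A⁻¹ = lam • (A⁻¹ * L⁻¹) := by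
      rw [Matrix.mul_smul, Matrix.smul_mul]
      congr 1
      rw [Matrix.mul_assoc, Matrix.mul_assoc, hAinv', Matrix.mul_one]
    rw [this]
    have h2 : A⁻¹ - L⁻¹ = A⁻¹ * (L - A) * L⁻¹ := by
      rw [Matrix.mul_sub, Matrix.sub_mul, Matrix.mul_assoc, hLinv', Matrix.mul_one, hAinv, Matrix.one_mul]
    rw [h2, hL]
    simp only [add_sub_cancel_left]
    rw [Matrix.mul_smul, Matrix.smul_mul, Matrix.mul_one]
  -- now conclude
  have hT : ((A⁻¹ * Xᵀ * Y)ᵀ) = Yᵀ * X * A⁻¹ := by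
    rw [Matrix.transpose_mul, Matrix.transpose_mul, hAinvT, Matrix.transpose_transpose,
      Matrix.mul_assoc]
  rw [hT]
  have expand : Yᵀ * (1 - X * L⁻¹ * Xᵀ) * Y - Yᵀ * (1 - X * A⁻¹ * Xᵀ) * Y
      = Yᵀ * (X * (A⁻¹ - L⁻¹) * Xᵀ) * Y := by
    simp only [Matrix.mul_sub, Matrix.sub_mul, Matrix.mul_one, Matrix.one_mul]
    abel
  have : Yᵀ * X * A⁻¹ * M⁻¹ * (A⁻¹ * Xᵀ * Y) = Yᵀ * (X * (A⁻¹ * M⁻¹ * A⁻¹) * Xᵀ) * Y := by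
    simp only [Matrix.mul_assoc]
  rw [this, ← hkey, ← expand]
  abel
end
end

section
/- Let C be a q×q real symmetric matrix, u ∈ ℝ^q, s > 0, and δ₀ ≥ 0, and suppose that C − u uᵀ/(s+δ₀) is positive definite. Then for every δ ≥ δ₀ the matrix C − u uᵀ/(s+δ) is positive definite, and the function δ ↦ det( C − u uᵀ/(s+δ) ) is monotonically nondecreasing on [δ₀, ∞) (strictly increasing when u ≠ 0). -/
open Matrix

noncomputable section

lemma aux_quad {q : ℕ} (u x : Fin q → ℝ) :
    x ⬝ᵥ (vecMulVec u u *ᵥ x) = (u ⬝ᵥ x) ^ 2 := by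
  simp only [vecMulVec, mulVec, dotProduct, of_apply, sq, Finset.sum_mul, Finset.mul_sum]
  rw [Finset.sum_comm]
  refine Finset.sum_congr rfl fun i _ => Finset.sum_congr rfl fun j _ => by ring

lemma aux_psd {q : ℕ} (c : ℝ) (hc : 0 ≤ c) (u : Fin q → ℝ) :
    (c • vecMulVec u u).PosSemidef := by
  refine posSemidef_iff_dotProduct_mulVec.mpr ⟨?_, ?_⟩
  · ext i j
    simp [conjTranspose_apply, vecMulVec_apply, mul_comm]
  · intro x
    simp only [star_trivial, smul_mulVec, dotProduct_smul, smul_eq_mul, aux_quad]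
    positivity

lemma aux_det {q : ℕ} (C : Matrix (Fin q) (Fin q) ℝ) (hC : IsUnit C.det) (t : ℝ)
    (u : Fin q → ℝ) :
    (C - t • vecMulVec u u).det = C.det * (1 - t * (u ⬝ᵥ C⁻¹ *ᵥ u)) := by
  have hinv : C * C⁻¹ = 1 := mul_nonsing_inv C hC
  have h1 : C - t • vecMulVec u u
      = C * (1 + replicateCol (Fin 1) (C⁻¹ *ᵥ ((-t) • u)) * replicateRow (Fin 1) u) := by
    rw [Matrix.mul_add, Matrix.mul_one, ← Matrix.mul_assoc, ← replicateCol_mulVec,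
      mulVec_mulVec, hinv, one_mulVec]
    ext i j
    simp only [Matrix.sub_apply, Matrix.smul_apply, vecMulVec_apply, Matrix.add_apply, Matrix.mul_apply,
      replicateCol_apply, replicateRow_apply, Fin.sum_univ_one, Pi.smul_apply, smul_eq_mul]
    ring
  erw [h1, det_mul, det_one_add_replicateCol_mul_replicateRow]
  rw [mulVec_smul, dotProduct_smul, neg_smul, smul_eq_mul, ← sub_eq_add_neg]

/-- if `C − u uᵀ/(s+δ₀)` is positive definite, then `C − u uᵀ/(s+δ)` is
positive definite for every `δ ≥ δ₀`, and `δ ↦ det(C − u uᵀ/(s+δ))` is monotonically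
nondecreasing on `[δ₀, ∞)` (strictly increasing when `u ≠ 0`). -/
theorem statement10 (q : ℕ) (C : Matrix (Fin q) (Fin q) ℝ) (hC : C.IsSymm)
    (u : Fin q → ℝ) (s δ₀ : ℝ) (hs : 0 < s) (hδ₀ : 0 ≤ δ₀)
    (hpd : (C - (s + δ₀)⁻¹ • vecMulVec u u).PosDef) :
    (∀ δ : ℝ, δ₀ ≤ δ → (C - (s + δ)⁻¹ • vecMulVec u u).PosDef) ∧
    MonotoneOn (fun δ : ℝ => (C - (s + δ)⁻¹ • vecMulVec u u).det) (Set.Ici δ₀) ∧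
    (u ≠ 0 →
      StrictMonoOn (fun δ : ℝ => (C - (s + δ)⁻¹ • vecMulVec u u).det) (Set.Ici δ₀)) := by
  have hs0 : 0 < s + δ₀ := by linarith
  have hinv_le : ∀ ⦃a b : ℝ⦄, δ₀ ≤ a → a ≤ b → (s + b)⁻¹ ≤ (s + a)⁻¹ := by
    intro a b ha hab
    apply inv_anti₀ <;> linarith
  have hinv_lt : ∀ ⦃a b : ℝ⦄, δ₀ ≤ a → a < b → (s + b)⁻¹ < (s + a)⁻¹ := by
    intro a b ha hab
    apply inv_strictAnti₀ <;> linarith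
  have hPD : ∀ δ : ℝ, δ₀ ≤ δ → (C - (s + δ)⁻¹ • vecMulVec u u).PosDef := by
    intro δ hδ
    have key : C - (s + δ)⁻¹ • vecMulVec u u
        = (C - (s + δ₀)⁻¹ • vecMulVec u u)
          + ((s + δ₀)⁻¹ - (s + δ)⁻¹) • vecMulVec u u := by
      rw [sub_smul]; abel
    rw [key]
    exact hpd.add_posSemidef (aux_psd _ (sub_nonneg.2 (hinv_le le_rfl hδ)) u)
  have hCpd : C.PosDef := by
    have : C = (C - (s + δ₀)⁻¹ • vecMulVec u u) + (s + δ₀)⁻¹ • vecMulVec u u := by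
      abel
    rw [this]
    exact hpd.add_posSemidef (aux_psd _ (inv_nonneg.2 hs0.le) u)
  have hdet : 0 < C.det := hCpd.det_pos
  have hU : IsUnit C.det := hdet.ne'.isUnit
  set c : ℝ := u ⬝ᵥ C⁻¹ *ᵥ u with hc
  have hc0 : 0 ≤ c := by simpa using hCpd.inv.posSemidef.dotProduct_mulVec_nonneg u
  refine ⟨hPD, ?_, ?_⟩
  · intro a ha b hb hab
    simp only [aux_det C hU]
    have h1 := hinv_le ha hab
    nlinarith [mul_nonneg (sub_nonneg.2 h1) hc0]
  · intro hu a ha b hb hab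
    simp only [aux_det C hU]
    have hcpos : 0 < c := by simpa using hCpd.inv.dotProduct_mulVec_pos hu
    have h1 := hinv_lt ha hab
    nlinarith [mul_pos (sub_pos.2 h1) hcpos]
end
end
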